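/- If a one-dimensional subshift Σ ⊆ A^Z is φ-realizable by projective subaction of a 2-dimensional sofic subshift with φ(k) ∈ o(log log k), then the complement of the language of Σ is decidable in space o(log log k), and hence (by the space hierarchy collapse below log log) L(Σ) is a regular language, so Σ is sofic. -/

import Mathlib

/-- A two-dimensional pattern over the alphabet `B`. -/
structure Pat2 (B : Type*) where
  supp : Finset (ℤ × ℤ)
  val : ℤ × ℤ → B

/-- The configuration `x` avoids all patterns of `F`. -/
def avoids2 {B : Type*} (F : Set (Pat2 B)) (x : ℤ × ℤ → B) : Prop :=
  ∀ p ∈ F, ¬ ∃ t, ∀ u ∈ p.supp, p.val u = x (u + t)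

/-- The configuration `x` avoids `F` wherever the translated support fits inside the
strip `ℤ × [-n,n]`. -/
def avoidsStrip2 {B : Type*} (F : Set (Pat2 B)) (n : ℕ) (x : ℤ × ℤ → B) : Prop :=
  ∀ p ∈ F, ∀ t : ℤ × ℤ,
    (∀ u ∈ p.supp, |(u + t).2| ≤ (n : ℤ)) →
    ¬ (∀ u ∈ p.supp, p.val u = x (u + t))

/-- The one-dimensional projective subaction of the two-dimensional SFT `T_F` composed
with the letter-to-letter factor map `π`. -/
def SArow2 {A B : Type*} (F : Set (Pat2 B)) (π : B → A) : Set (ℤ → A) :=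
  {y | ∃ x : ℤ × ℤ → B, avoids2 F x ∧ ∀ i : ℤ, y i = π (x (i, 0))}

/-- The width-`n` strip approximation of the previous projective subaction. -/
def RowApprox2 {A B : Type*} (F : Set (Pat2 B)) (π : B → A) (n : ℕ) : Set (ℤ → A) :=
  {y | ∃ x : ℤ × ℤ → B, avoidsStrip2 F n x ∧ ∀ i : ℤ, y i = π (x (i, 0))}

/-- The language of words of length `k` of a set of configurations of `A^ℤ`. -/
def wordLang {A : Type*} (S : Set (ℤ → A)) (k : ℕ) : Set (Fin k → A) :=
  {w | ∃ y ∈ S, ∃ t : ℤ, ∀ i : Fin k, w i = y (t + (i : ℤ))}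

namespace SoficAux

variable {A B : Type*}

lemma strip_mono {F : Set (Pat2 B)} {n n' : ℕ} (h : n ≤ n') {x : ℤ × ℤ → B}
    (hx : avoidsStrip2 F n' x) : avoidsStrip2 F n x := by
  intro p hp t ht
  refine hx p hp t (fun u hu => le_trans (ht u hu) ?_)
  exact_mod_cast Nat.cast_le.mpr h

lemma avoids2_strip {F : Set (Pat2 B)} {n : ℕ} {x : ℤ × ℤ → B} (hx : avoids2 F x) :
    avoidsStrip2 F n x :=
  fun p hp t _ hocc => hx p hp ⟨t, hocc⟩

lemma SArow2_sub {A : Type*} {F : Set (Pat2 B)} {π : B → A} {n : ℕ} :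
    SArow2 F π ⊆ RowApprox2 F π n := by
  rintro y ⟨x, hx, hy⟩; exact ⟨x, avoids2_strip hx, hy⟩

lemma rowApprox_anti {A : Type*} {F : Set (Pat2 B)} {π : B → A} {n n' : ℕ} (h : n ≤ n') :
    RowApprox2 F π n' ⊆ RowApprox2 F π n := by
  rintro y ⟨x, hx, hy⟩; exact ⟨x, strip_mono h hx, hy⟩

lemma wordLang_mono {A : Type*} {S S' : Set (ℤ → A)} (h : S ⊆ S') {k : ℕ} :
    wordLang S k ⊆ wordLang S' k := by
  rintro w ⟨y, hy, t, ht⟩; exact ⟨y, h hy, t, ht⟩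

/-! ### strip-coding machinery -/

abbrev Col (q W n : ℕ) : Type :=
  ↥(Finset.Icc (-(W:ℤ)) (W:ℤ)) → ↥(Finset.Icc (-(n:ℤ)) (n:ℤ)) → Fin q

lemma zero_mem_Icc (M : ℕ) : (0:ℤ) ∈ Finset.Icc (-(M:ℤ)) (M:ℤ) := by
  simp only [Finset.mem_Icc]; omega

variable (q W : ℕ) (F : Set (Pat2 B))

def ColValid (e : B ≃ Fin q) (n : ℕ) (c : Col q W n) : Prop :=
  ∀ p ∈ F, ∀ b : ℤ,
    ¬ (∀ u ∈ p.supp, ∃ (h1 : u.1 ∈ Finset.Icc (-(W:ℤ)) (W:ℤ))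
        (h2 : u.2 + b ∈ Finset.Icc (-(n:ℤ)) (n:ℤ)),
        p.val u = e.symm (c ⟨u.1, h1⟩ ⟨u.2 + b, h2⟩))

def ColEdge (e : B ≃ Fin q) (n : ℕ) (c c' : Col q W n) : Prop :=
  ColValid q W F e n c ∧ ColValid q W F e n c' ∧
  ∀ (a r : ℤ) (ha : a ∈ Finset.Icc (-(W:ℤ)) (W:ℤ))
    (ha' : a - 1 ∈ Finset.Icc (-(W:ℤ)) (W:ℤ))
    (hr : r ∈ Finset.Icc (-(n:ℤ)) (n:ℤ)),
    c ⟨a, ha⟩ ⟨r, hr⟩ = c' ⟨a - 1, ha'⟩ ⟨r, hr⟩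

variable (π : B → A)

def colRho (e : B ≃ Fin q) (n : ℕ) (c : Col q W n) : A :=
  π (e.symm (c ⟨0, zero_mem_Icc W⟩ ⟨0, zero_mem_Icc n⟩))

def PathSet (e : B ≃ Fin q) (n : ℕ) : Set (ℤ → A) :=
  {y | ∃ z : ℤ → Col q W n, (∀ i : ℤ, ColEdge q W F e n (z i) (z (i+1))) ∧
    ∀ i : ℤ, y i = colRho q W π e n (z i)}

variable {q W F π}

lemma rowApprox_subset_pathSet (e : B ≃ Fin q) (n : ℕ) :
    RowApprox2 F π n ⊆ PathSet q W F π e n := by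
  rintro y ⟨x, hx, hy⟩
  have hval : ∀ j : ℤ, ColValid q W F e n (fun a r => e (x (j + a.1, r.1))) := by
    intro j p hp b hcon
    refine hx p hp (j, b) (fun u hu => ?_) (fun u hu => ?_)
    · obtain ⟨h1, h2, -⟩ := hcon u hu
      have h2' := Finset.mem_Icc.mp h2
      have : (u + (j, b)).2 = u.2 + b := rfl
      rw [this, abs_le]; omega
    · obtain ⟨h1, h2, hv⟩ := hcon u hu
      have : u + (j, b) = (j + u.1, u.2 + b) := by
        ext <;> simp [add_comm]
      rw [this]
      simpa using hv
  refine ⟨fun i a r => e (x (i + a.1, r.1)), fun i => ?_, fun i => ?_⟩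
  · refine ⟨hval i, hval (i+1), fun a r ha ha' hr => ?_⟩
    have : i + a = i + 1 + (a - 1) := by ring
    simp only [this]
  · simpa [colRho] using hy i

lemma pathSet_subset_rowApprox (e : B ≃ Fin q)
    (hW : ∀ p ∈ F, ∀ u ∈ p.supp, |u.1| ≤ (W:ℤ)) (n : ℕ) :
    PathSet q W F π e n ⊆ RowApprox2 F π n := by
  classical
  rintro y ⟨z, hz, hy⟩
  -- coherence of overlapping columns
  have cohpos : ∀ (dn : ℕ) (d i : ℤ), d = (dn:ℤ) →
      ∀ (hd : d ∈ Finset.Icc (-(W:ℤ)) (W:ℤ)) (r : ℤ)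
        (hr : r ∈ Finset.Icc (-(n:ℤ)) (n:ℤ)),
      z i ⟨d, hd⟩ ⟨r, hr⟩ = z (i + d) ⟨0, zero_mem_Icc W⟩ ⟨r, hr⟩ := by
    intro dn
    induction dn with
    | zero =>
      intro d i hd0 hd r hr
      subst hd0
      have h0 : ((0:ℕ):ℤ) = (0:ℤ) := rfl
      simp only [h0] at hd ⊢
      rw [add_zero]
    | succ dd ih =>
      intro d i hd0 hd r hr
      obtain ⟨-, -, hov⟩ := hz i
      have hd' : d - 1 ∈ Finset.Icc (-(W:ℤ)) (W:ℤ) := by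
        simp only [Finset.mem_Icc] at hd ⊢; omega
      rw [hov d r hd hd' hr, ih (d-1) (i+1) (by omega) hd' r hr]
      have : i + 1 + (d - 1) = i + d := by ring
      rw [this]
  have cohneg : ∀ (dn : ℕ) (d i : ℤ), d = -(dn:ℤ) →
      ∀ (hd : d ∈ Finset.Icc (-(W:ℤ)) (W:ℤ)) (r : ℤ)
        (hr : r ∈ Finset.Icc (-(n:ℤ)) (n:ℤ)),
      z i ⟨d, hd⟩ ⟨r, hr⟩ = z (i + d) ⟨0, zero_mem_Icc W⟩ ⟨r, hr⟩ := by
    intro dn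
    induction dn with
    | zero =>
      intro d i hd0 hd r hr
      have : d = 0 := by omega
      subst this
      rw [add_zero]
    | succ dd ih =>
      intro d i hd0 hd r hr
      obtain ⟨-, -, hov⟩ := hz (i - 1)
      have hd1 : d + 1 ∈ Finset.Icc (-(W:ℤ)) (W:ℤ) := by
        simp only [Finset.mem_Icc] at hd ⊢; omega
      have hstep : z (i-1) ⟨d + 1, hd1⟩ ⟨r, hr⟩ = z i ⟨d, hd⟩ ⟨r, hr⟩ := by
        have h1 : d + 1 - 1 = d := by ring
        have := hov (d+1) r hd1 (by rw [h1]; exact hd) hr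
        convert this using 3
        · have : i - 1 + 1 = i := by ring
          rw [this]
        · exact h1.symm
      rw [← hstep, ih (d+1) (i-1) (by omega) hd1 r hr]
      have : i - 1 + (d + 1) = i + d := by ring
      rw [this]
  have coh : ∀ (d i : ℤ)
      (hd : d ∈ Finset.Icc (-(W:ℤ)) (W:ℤ)) (r : ℤ)
      (hr : r ∈ Finset.Icc (-(n:ℤ)) (n:ℤ)),
      z i ⟨d, hd⟩ ⟨r, hr⟩ = z (i + d) ⟨0, zero_mem_Icc W⟩ ⟨r, hr⟩ := by
    intro d i hd r hr
    rcases Int.eq_nat_or_neg d with ⟨dn, hdn | hdn⟩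
    · exact cohpos dn d i hdn hd r hr
    · exact cohneg dn d i hdn hd r hr
  -- the strip configuration
  set x : ℤ × ℤ → B := fun v =>
    if h : v.2 ∈ Finset.Icc (-(n:ℤ)) (n:ℤ) then
      e.symm (z v.1 ⟨0, zero_mem_Icc W⟩ ⟨v.2, h⟩)
    else e.symm (z v.1 ⟨0, zero_mem_Icc W⟩ ⟨0, zero_mem_Icc n⟩) with hxdef
  refine ⟨x, ?_, ?_⟩
  · intro p hp t hrow hocc
    refine (hz t.1).1 p hp t.2 (fun u hu => ?_)
    have h1 : u.1 ∈ Finset.Icc (-(W:ℤ)) (W:ℤ) := by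
      have := hW p hp u hu
      rw [abs_le] at this
      exact Finset.mem_Icc.mpr this
    have h2 : u.2 + t.2 ∈ Finset.Icc (-(n:ℤ)) (n:ℤ) := by
      have := hrow u hu
      have hsnd : (u + t).2 = u.2 + t.2 := rfl
      rw [hsnd, abs_le] at this
      exact Finset.mem_Icc.mpr this
    refine ⟨h1, h2, ?_⟩
    have hxval := hocc u hu
    have hco : u + t = (u.1 + t.1, u.2 + t.2) := rfl
    rw [hco] at hxval
    rw [hxval, hxdef]
    simp only [dif_pos h2]
    congr 1
    rw [coh u.1 t.1 h1 (u.2 + t.2) h2]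
    have : t.1 + u.1 = u.1 + t.1 := by ring
    rw [this]
  · intro i
    rw [hy i, hxdef, colRho]
    simp only [dif_pos (zero_mem_Icc n)]


/-! ### bi-infinite path relations -/

variable (q W F π) in
def GoodP (e : B ≃ Fin q) (n k : ℕ) (w : Fin k → A) (c c' : Col q W n) : Prop :=
  ∃ z : ℤ → Col q W n, (∀ i : ℤ, ColEdge q W F e n (z i) (z (i+1))) ∧
    z 0 = c ∧ z (k:ℤ) = c' ∧ ∀ i : Fin k, w i = colRho q W π e n (z (i:ℤ))

variable (q W F π) in
def GoodSet (e : B ≃ Fin q) (n k : ℕ) (w : Fin k → A) : Set (Col q W n × Col q W n) :=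
  {cc | GoodP q W F π e n k w cc.1 cc.2}

lemma GoodP.congr {e : B ≃ Fin q} {n k : ℕ} {w w' : Fin k → A} {c c' : Col q W n}
    (h : GoodP q W F π e n k w c c') (hw : ∀ i, w' i = w i) :
    GoodP q W F π e n k w' c c' := by
  obtain ⟨z, h1, h2, h3, h4⟩ := h
  exact ⟨z, h1, h2, h3, fun i => (hw i).trans (h4 i)⟩

/-- extracting a segment of a bi-infinite realization -/
lemma seg {e : B ≃ Fin q} {n : ℕ} {z : ℤ → Col q W n}
    (hz : ∀ i : ℤ, ColEdge q W F e n (z i) (z (i+1)))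
    (s : ℤ) (l : ℕ) (v : Fin l → A)
    (hv : ∀ i : Fin l, v i = colRho q W π e n (z (s + (i:ℤ)))) :
    GoodP q W F π e n l v (z s) (z (s + (l:ℤ))) := by
  refine ⟨fun i => z (s + i), fun i => ?_, ?_, rfl, fun i => hv i⟩
  · show ColEdge q W F e n (z (s + i)) (z (s + (i + 1)))
    have h : s + (i + 1) = (s + i) + 1 := by ring
    rw [h]
    exact hz (s + i)
  · show z (s + 0) = z s
    rw [add_zero]

/-- splicing two compatible runs together -/
lemma splice {e : B ≃ Fin q} {n : ℕ} (j k : ℕ) (hj : j ≤ k) (w : Fin k → A)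
    {c d c' : Col q W n}
    (h₁ : GoodP q W F π e n j (fun i => w (Fin.castLE hj i)) c d)
    (h₂ : GoodP q W F π e n (k - j) (fun i : Fin (k - j) => w ⟨j + (i:ℕ), by omega⟩) d c') :
    GoodP q W F π e n k w c c' := by
  obtain ⟨z₁, hz₁, hz₁0, hz₁j, hr₁⟩ := h₁
  obtain ⟨z₂, hz₂, hz₂0, hz₂k, hr₂⟩ := h₂
  have hd : z₁ (j:ℤ) = z₂ 0 := by rw [hz₁j, hz₂0]
  refine ⟨fun i => if i < (j:ℤ) then z₁ i else z₂ (i - (j:ℤ)), fun i => ?_, ?_, ?_, ?_⟩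
  · show ColEdge q W F e n (if i < (j:ℤ) then z₁ i else z₂ (i - (j:ℤ)))
      (if i + 1 < (j:ℤ) then z₁ (i+1) else z₂ (i + 1 - (j:ℤ)))
    rcases lt_or_ge i ((j:ℤ) - 1) with h | h
    · rw [if_pos (by omega), if_pos (by omega)]
      exact hz₁ i
    · rcases lt_or_ge i (j:ℤ) with h' | h'
      · rw [if_pos (by omega), if_neg (by omega)]
        have h2 : i + 1 - (j:ℤ) = 0 := by omega
        rw [h2, ← hd]
        have h3 : (j:ℤ) = i + 1 := by omega
        rw [h3]
        exact hz₁ i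
      · rw [if_neg (by omega), if_neg (by omega)]
        have h4 : i + 1 - (j:ℤ) = (i - (j:ℤ)) + 1 := by ring
        rw [h4]
        exact hz₂ (i - (j:ℤ))
  · show (if (0:ℤ) < (j:ℤ) then z₁ 0 else z₂ (0 - (j:ℤ))) = c
    rcases Nat.eq_zero_or_pos j with hj0 | hj0
    · subst hj0
      rw [if_neg (by omega)]
      have : (0:ℤ) - ((0:ℕ):ℤ) = 0 := by norm_num
      rw [this, hz₂0, ← hz₁j, ← hz₁0]
      norm_num
    · rw [if_pos (by exact_mod_cast hj0), hz₁0]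
  · show (if (k:ℤ) < (j:ℤ) then z₁ (k:ℤ) else z₂ ((k:ℤ) - (j:ℤ))) = c'
    rw [if_neg (by omega)]
    have : (k:ℤ) - (j:ℤ) = ((k - j : ℕ) : ℤ) := by omega
    rw [this, hz₂k]
  · intro i
    show w i = colRho q W π e n
      (if ((i:ℕ):ℤ) < (j:ℤ) then z₁ ((i:ℕ):ℤ) else z₂ (((i:ℕ):ℤ) - (j:ℤ)))
    rcases lt_or_ge ((i:ℕ)) j with h | h
    · rw [if_pos (by exact_mod_cast h)]
      have := hr₁ ⟨(i:ℕ), h⟩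
      simpa using this
    · rw [if_neg (by exact_mod_cast not_lt.mpr h)]
      have hlt2 : (i:ℕ) - j < k - j := by omega
      have := hr₂ ⟨(i:ℕ) - j, hlt2⟩
      dsimp only at this
      have hidx : (⟨j + ((i:ℕ) - j), by omega⟩ : Fin k) = i := by
        apply Fin.ext; simp; omega
      rw [hidx] at this
      convert this using 3
      omega

lemma mem_lang_iff {e : B ≃ Fin q}
    (hW : ∀ p ∈ F, ∀ u ∈ p.supp, |u.1| ≤ (W:ℤ)) (n k : ℕ) (w : Fin k → A) :
    w ∈ wordLang (RowApprox2 F π n) k ↔ ∃ c c', GoodP q W F π e n k w c c' := by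
  constructor
  · rintro ⟨y, hy, t, ht⟩
    obtain ⟨z, hz, hyz⟩ := rowApprox_subset_pathSet (W := W) e n hy
    refine ⟨z t, z (t + (k:ℤ)), fun i => z (t + i), fun i => ?_, ?_, rfl, fun i => ?_⟩
    · show ColEdge q W F e n (z (t + i)) (z (t + (i + 1)))
      have h : t + (i + 1) = (t + i) + 1 := by ring
      rw [h]; exact hz (t + i)
    · show z (t + 0) = z t
      rw [add_zero]
    · show w i = colRho q W π e n (z (t + (i:ℤ)))
      rw [ht i, hyz (t + (i:ℤ))]
  · rintro ⟨c, c', z, hz, -, -, hr⟩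
    refine ⟨fun i => colRho q W π e n (z i),
      pathSet_subset_rowApprox e hW n ⟨z, hz, fun _ => rfl⟩, 0, fun i => ?_⟩
    rw [hr i, zero_add]


/-! ### compactness: equality of languages gives equality of subshifts -/

lemma avoids2_shift {F : Set (Pat2 B)} {x : ℤ × ℤ → B} (hx : avoids2 F x) (s : ℤ) :
    avoids2 F (fun v => x (v.1 + s, v.2)) := by
  rintro p hp ⟨t, hocc⟩
  refine hx p hp ⟨(t.1 + s, t.2), fun u hu => ?_⟩
  have h := hocc u hu
  have h1 : u + (t.1 + s, t.2) = ((u + t).1 + s, (u + t).2) := by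
    ext <;> simp <;> ring
  rw [h1]
  exact h

lemma rowApprox_subset_SArow [Fintype B] {F : Set (Pat2 B)} {π : B → A} (n₀ : ℕ)
    (hlang : ∀ k, wordLang (RowApprox2 F π n₀) k ⊆ wordLang (SArow2 F π) k) :
    RowApprox2 F π n₀ ⊆ SArow2 F π := by
  classical
  intro y hy
  letI : TopologicalSpace B := ⊥
  haveI : DiscreteTopology B := ⟨rfl⟩
  -- the approximating compact sets
  set K : ℕ → Set (ℤ × ℤ → B) := fun r =>
    {x | (∀ p ∈ F, ∀ t : ℤ × ℤ,
        (∀ u ∈ p.supp, |(u + t).1| ≤ (r:ℤ) ∧ |(u + t).2| ≤ (r:ℤ)) →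
        ¬ (∀ u ∈ p.supp, p.val u = x (u + t))) ∧
      ∀ i : ℤ, |i| ≤ (r:ℤ) → y i = π (x (i, 0))} with hK
  have hclosed : ∀ r, IsClosed (K r) := by
    intro r
    have h1 : IsClosed {x : ℤ × ℤ → B | ∀ p ∈ F, ∀ t : ℤ × ℤ,
        (∀ u ∈ p.supp, |(u + t).1| ≤ (r:ℤ) ∧ |(u + t).2| ≤ (r:ℤ)) →
        ¬ (∀ u ∈ p.supp, p.val u = x (u + t))} := by
      have heq : {x : ℤ × ℤ → B | ∀ p ∈ F, ∀ t : ℤ × ℤ,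
          (∀ u ∈ p.supp, |(u + t).1| ≤ (r:ℤ) ∧ |(u + t).2| ≤ (r:ℤ)) →
          ¬ (∀ u ∈ p.supp, p.val u = x (u + t))} =
          ⋂ (p : Pat2 B) (_ : p ∈ F) (t : ℤ × ℤ)
            (_ : ∀ u ∈ p.supp, |(u + t).1| ≤ (r:ℤ) ∧ |(u + t).2| ≤ (r:ℤ)),
            ({x : ℤ × ℤ → B | ∀ u ∈ p.supp, p.val u = x (u + t)})ᶜ := by
        ext x; simp [Set.mem_iInter]
      rw [heq]
      refine isClosed_iInter fun p => isClosed_iInter fun hp =>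
        isClosed_iInter fun t => isClosed_iInter fun ht => ?_
      rw [isClosed_compl_iff]
      have heq2 : {x : ℤ × ℤ → B | ∀ u ∈ p.supp, p.val u = x (u + t)} =
          ⋂ u ∈ p.supp, (fun x : ℤ × ℤ → B => x (u + t)) ⁻¹' {b | p.val u = b} := by
        ext x
        simp only [Set.mem_setOf_eq, Set.mem_iInter, Set.mem_preimage]
      rw [heq2]
      exact isOpen_biInter_finset fun u hu =>
        (continuous_apply (u + t)).isOpen_preimage _ (isOpen_discrete _)
    have h2 : IsClosed {x : ℤ × ℤ → B | ∀ i : ℤ, |i| ≤ (r:ℤ) → y i = π (x (i, 0))} := by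
      have heq : {x : ℤ × ℤ → B | ∀ i : ℤ, |i| ≤ (r:ℤ) → y i = π (x (i, 0))} =
          ⋂ (i : ℤ) (_ : |i| ≤ (r:ℤ)),
            (fun x : ℤ × ℤ → B => x (i, 0)) ⁻¹' {b | y i = π b} := by
        ext x; simp [Set.mem_iInter]
      rw [heq]
      refine isClosed_iInter fun i => isClosed_iInter fun hi => ?_
      exact IsClosed.preimage (continuous_apply ((i : ℤ), (0:ℤ))) (isClosed_discrete _)
    exact h1.inter h2
  have hnonempty : ∀ r, (K r).Nonempty := by
    intro r
    have hw : (fun i : Fin (2*r+1) => y (-(r:ℤ) + (i:ℤ))) ∈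
        wordLang (RowApprox2 F π n₀) (2*r+1) := ⟨y, hy, -(r:ℤ), fun i => rfl⟩
    obtain ⟨y', ⟨x', hx', hrow'⟩, t', hmatch⟩ := hlang _ hw
    refine ⟨fun v => x' (v.1 + (t' + r), v.2), ?_, ?_⟩
    · intro p hp t _ hocc
      exact avoids2_shift hx' (t' + r) p hp ⟨t, hocc⟩
    · intro i hi
      rw [abs_le] at hi
      have hnn : (0:ℤ) ≤ i + r := by omega
      have hlt : (i + r).toNat < 2*r+1 := by omega
      have hmm := hmatch ⟨(i + r).toNat, hlt⟩
      dsimp only at hmm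
      have hcast : (((i + r).toNat : ℕ) : ℤ) = i + r := Int.toNat_of_nonneg hnn
      rw [hcast] at hmm
      have h1 : -(r:ℤ) + (i + r) = i := by ring
      rw [h1] at hmm
      show y i = π (x' (i + (t' + (r:ℤ)), 0))
      rw [hmm, hrow' (t' + (i + r))]
      have h2 : t' + (i + r) = i + (t' + (r:ℤ)) := by ring
      rw [h2]
  have hdir : Directed (· ⊇ ·) K := by
    have hanti : Antitone K := by
      intro r r' hrr x hx
      constructor
      · intro p hp t ht
        exact hx.1 p hp t (fun u hu => ⟨(ht u hu).1.trans (by exact_mod_cast hrr),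
          (ht u hu).2.trans (by exact_mod_cast hrr)⟩)
      · intro i hi
        exact hx.2 i (hi.trans (by exact_mod_cast hrr))
    exact hanti.directed_ge
  obtain ⟨x, hx⟩ := IsCompact.nonempty_iInter_of_directed_nonempty_isCompact_isClosed
    K hdir hnonempty (fun r => (hclosed r).isCompact) hclosed
  rw [Set.mem_iInter] at hx
  refine ⟨x, ?_, ?_⟩
  · rintro p hp ⟨t, hocc⟩
    set r : ℕ := p.supp.sup (fun u => (u + t).1.natAbs ⊔ (u + t).2.natAbs) with hr
    refine (hx r).1 p hp t (fun u hu => ?_) hocc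
    have hle := Finset.le_sup (f := fun u => (u + t).1.natAbs ⊔ (u + t).2.natAbs) hu
    rw [← hr] at hle
    have hle1 : (u + t).1.natAbs ≤ r := le_trans (le_max_left _ _) hle
    have hle2 : (u + t).2.natAbs ≤ r := le_trans (le_max_right _ _) hle
    constructor
    · rw [Int.abs_eq_natAbs]; exact_mod_cast hle1
    · rw [Int.abs_eq_natAbs]; exact_mod_cast hle2
  · intro i
    refine (hx i.natAbs).2 i ?_
    rw [Int.abs_eq_natAbs]


/-! ### cardinality of the column alphabet -/

lemma card_col (q W n : ℕ) :
    Fintype.card (Col q W n) = q ^ ((2*n+1) * (2*W+1)) := by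
  have h1 : Fintype.card ↥(Finset.Icc (-(W:ℤ)) (W:ℤ)) = 2*W+1 := by
    rw [Fintype.card_coe, Int.card_Icc]; omega
  have h2 : Fintype.card ↥(Finset.Icc (-(n:ℤ)) (n:ℤ)) = 2*n+1 := by
    rw [Fintype.card_coe, Int.card_Icc]; omega
  rw [Fintype.card_fun, Fintype.card_fun, h1, h2, Fintype.card_fin, ← pow_mul]

lemma card_pair_set (α β : Type*) [Fintype α] [Fintype β] :
    Fintype.card (Set (α × α) × Set (β × β)) =
      2 ^ (Fintype.card α * Fintype.card α) * 2 ^ (Fintype.card β * Fintype.card β) := by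
  rw [Fintype.card_prod, Fintype.card_set, Fintype.card_set,
    Fintype.card_prod, Fintype.card_prod]

end SoficAux


open SoficAux in
/-- Sofic realization statement: if a one-dimensional subshift is realized as the
projective subaction of a two-dimensional SFT composed with a letter-to-letter factor
map with speed of convergence `φ(k) ∈ o(log log k)`, then it is sofic: it is the image
under a letter-to-letter map of a one-dimensional nearest-neighbour SFT over a finite
alphabet. -/
theorem o_loglog_speed_implies_sofic {A B : Type*} [Fintype A] [Fintype B]
    (F : Set (Pat2 B)) (hF : F.Finite) (π : B → A) (φ : ℕ → ℕ)
    (hφ : ∀ k : ℕ, ∀ u : Fin k → A,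
      u ∉ wordLang (SArow2 F π) k → u ∉ wordLang (RowApprox2 F π (φ k)) k)
    (hlittle : (fun k : ℕ => (φ k : ℝ)) =o[Filter.atTop]
      fun k : ℕ => Real.log (Real.log (k : ℝ))) :
    ∃ (C : Type) (_ : Fintype C) (E : Set (C × C)) (ρ : C → A),
      SArow2 F π =
        {y : ℤ → A | ∃ z : ℤ → C, (∀ i : ℤ, (z i, z (i + 1)) ∈ E) ∧
          ∀ i : ℤ, y i = ρ (z i)} := by
  classical
  set q := Fintype.card B with hq
  set e := Fintype.equivFin B with he
  obtain ⟨W, hW⟩ : ∃ W : ℕ, ∀ p ∈ F, ∀ u ∈ p.supp, |u.1| ≤ (W:ℤ) := by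
    refine ⟨hF.toFinset.sup (fun p => p.supp.sup (fun u => u.1.natAbs)), ?_⟩
    intro p hp u hu
    have h1 : u.1.natAbs ≤ p.supp.sup (fun u => u.1.natAbs) :=
      Finset.le_sup (f := fun u : ℤ × ℤ => u.1.natAbs) hu
    have h2 : p.supp.sup (fun u => u.1.natAbs) ≤
        hF.toFinset.sup (fun p => p.supp.sup (fun u : ℤ × ℤ => u.1.natAbs)) :=
      Finset.le_sup (f := fun p : Pat2 B => p.supp.sup (fun u : ℤ × ℤ => u.1.natAbs))
        (hF.mem_toFinset.mpr hp)
    rw [Int.abs_eq_natAbs]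
    exact_mod_cast h1.trans h2
  -- numeric constants
  obtain ⟨Q, hQdef⟩ : ∃ Q : ℕ, Q = q + 2 := ⟨_, rfl⟩
  have hQ2 : 2 ≤ Q := by omega
  have hQ1R : (1:ℝ) < (Q:ℝ) := by exact_mod_cast by omega
  have hlogQ : 0 < Real.log Q := Real.log_pos hQ1R
  obtain ⟨c, hcdef⟩ : ∃ c : ℕ, c = 16 * (W + 1) := ⟨_, rfl⟩
  have hc1 : 1 ≤ c := by omega
  obtain ⟨ε, hεdef⟩ : ∃ ε : ℝ, ε = 1 / (4 * (c:ℝ) * Real.log Q) := ⟨_, rfl⟩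
  have hε : 0 < ε := by
    rw [hεdef]
    have : (0:ℝ) < (c:ℝ) := by exact_mod_cast hc1
    positivity
  obtain ⟨K₀, hK₀⟩ := Filter.eventually_atTop.mp (hlittle.def hε)
  set T : ℕ := max K₀ 4 with hTdef
  set n₀ : ℕ := ((Finset.range T).sup φ) + 1 with hn₀def
  -- the key language inclusion
  have hlang : ∀ k, wordLang (RowApprox2 F π n₀) k ⊆ wordLang (SArow2 F π) k := by
    intro k
    induction k using Nat.strong_induction_on with
    | _ k IH =>
    intro w hw
    by_contra hns
    have hwm : w ∉ wordLang (RowApprox2 F π (φ k)) k := hφ k w hns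
    set m := φ k with hmdef
    have hm : n₀ < m := by
      by_contra h
      push_neg at h
      exact hwm (wordLang_mono (rowApprox_anti h) hw)
    have hm1 : 1 ≤ m := by omega
    have hkT : T ≤ k := by
      by_contra h
      push_neg at h
      have : φ k ≤ (Finset.range T).sup φ := Finset.le_sup (Finset.mem_range.mpr h)
      omega
    by_cases hbig : Fintype.card ((Set (Col q W n₀ × Col q W n₀)) ×
        (Set (Col q W m × Col q W m))) < k + 1
    · -- pigeonhole and pumping
      have hbig' : Fintype.card ((Set (Col q W n₀ × Col q W n₀)) ×
          (Set (Col q W m × Col q W m))) < Fintype.card (Fin (k+1)) := by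
        rwa [Fintype.card_fin]
      obtain ⟨j₁, j₂, hne, hfeq⟩ := Fintype.exists_ne_map_eq_of_card_lt
        (fun j : Fin (k+1) =>
          (GoodSet q W F π e n₀ (j:ℕ) (fun i : Fin (j:ℕ) =>
            w (Fin.castLE (Nat.lt_succ_iff.mp j.2) i)),
           GoodSet q W F π e m (j:ℕ) (fun i : Fin (j:ℕ) =>
            w (Fin.castLE (Nat.lt_succ_iff.mp j.2) i)))) hbig'
      -- order the two indices
      obtain ⟨a, b, hab, hak, hbk, hGn, hGm⟩ :
          ∃ a b : ℕ, a < b ∧ a ≤ k ∧ b ≤ k ∧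
          (∀ (ha : a ≤ k) (hb : b ≤ k),
            GoodSet q W F π e n₀ a (fun i : Fin a => w (Fin.castLE ha i)) =
            GoodSet q W F π e n₀ b (fun i : Fin b => w (Fin.castLE hb i))) ∧
          (∀ (ha : a ≤ k) (hb : b ≤ k),
            GoodSet q W F π e m a (fun i : Fin a => w (Fin.castLE ha i)) =
            GoodSet q W F π e m b (fun i : Fin b => w (Fin.castLE hb i))) := by
        have hvne : (j₁:ℕ) ≠ (j₂:ℕ) := fun h => hne (Fin.ext h)
        rcases hvne.lt_or_gt with h | h
        · refine ⟨j₁, j₂, h, Nat.lt_succ_iff.mp j₁.2, Nat.lt_succ_iff.mp j₂.2,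
            fun _ _ => ?_, fun _ _ => ?_⟩
          · exact congrArg Prod.fst hfeq
          · exact congrArg Prod.snd hfeq
        · refine ⟨j₂, j₁, h, Nat.lt_succ_iff.mp j₂.2, Nat.lt_succ_iff.mp j₁.2,
            fun _ _ => ?_, fun _ _ => ?_⟩
          · exact (congrArg Prod.fst hfeq).symm
          · exact (congrArg Prod.snd hfeq).symm
      obtain ⟨c0, c1, z, hzE, hz0, hzk, hzr⟩ :=
        (mem_lang_iff (e := e) hW n₀ k w).mp hw
      set k' : ℕ := a + (k - b) with hk'def
      have hak' : a ≤ k' := by omega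
      have hk'k : k' < k := by omega
      set w' : Fin k' → A := fun i =>
        if h : (i:ℕ) < a then w ⟨(i:ℕ), by omega⟩
        else w ⟨b + ((i:ℕ) - a), by omega⟩ with hw'def
      have hw'lt : ∀ (i : Fin k') (h : (i:ℕ) < a), w' i = w ⟨(i:ℕ), by omega⟩ := by
        intro i h
        simp only [hw'def]
        rw [dif_pos h]
      have hw'ge : ∀ (i : Fin k') (h : a ≤ (i:ℕ)), w' i = w ⟨b + ((i:ℕ) - a), by omega⟩ := by
        intro i h
        simp only [hw'def]
        rw [dif_neg (by omega)]
      -- (z 0, z b) ∈ GoodSet n₀ b (pre b), hence ∈ GoodSet n₀ a (pre a)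
      have hseg1 : GoodP q W F π e n₀ b (fun i : Fin b => w (Fin.castLE hbk i))
          (z 0) (z (b:ℤ)) := by
        have := seg (π := π) hzE 0 b (fun i : Fin b => w (Fin.castLE hbk i)) ?_
        · rwa [zero_add] at this
        · intro i
          have h := hzr (Fin.castLE hbk i)
          rw [h]
          have hco : ((Fin.castLE hbk i : Fin k) : ℤ) = 0 + ((i : ℕ) : ℤ) := by
            rw [zero_add]; exact_mod_cast Fin.coe_castLE hbk i
          rw [hco]
      have hmem1 : ((z 0, z (b:ℤ)) : Col q W n₀ × Col q W n₀) ∈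
          GoodSet q W F π e n₀ b (fun i : Fin b => w (Fin.castLE hbk i)) := hseg1
      rw [← hGn hak hbk] at hmem1
      -- second piece of z, giving w' realizable at width n₀
      have hseg2 : GoodP q W F π e n₀ (k' - a)
          (fun i : Fin (k' - a) => w' ⟨a + (i:ℕ), by omega⟩) (z (b:ℤ)) (z (k:ℤ)) := by
        have := seg (π := π) hzE (b:ℤ) (k' - a)
          (fun i : Fin (k' - a) => w' ⟨a + (i:ℕ), by omega⟩) ?_
        · have hcast : (b:ℤ) + ((k' - a : ℕ) : ℤ) = (k:ℤ) := by omega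
          rwa [hcast] at this
        · intro i
          have hig : a ≤ ((⟨a + (i:ℕ), by omega⟩ : Fin k') : ℕ) := by simp
          rw [hw'ge _ hig]
          have hidx : (⟨b + ((((⟨a + (i:ℕ), by omega⟩ : Fin k') : ℕ)) - a), by omega⟩ : Fin k)
              = ⟨b + (i:ℕ), by omega⟩ := by
            apply Fin.ext; simp
          rw [hidx]
          have h := hzr ⟨b + (i:ℕ), by omega⟩
          rw [h]
          congr 1
      -- splice: w' realizable at width n₀
      have hG' : GoodP q W F π e n₀ k' w' (z 0) (z (k:ℤ)) := by
        refine splice (d := z (b:ℤ)) a k' hak' w' ?_ ?_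
        · refine GoodP.congr hmem1 ?_
          intro i
          have h : ((Fin.castLE hak' i : Fin k') : ℕ) < a := by
            simpa using i.2
          rw [hw'lt _ h]
          apply congrArg
          apply Fin.ext
          simp
        · exact hseg2
      have hw'mem : w' ∈ wordLang (RowApprox2 F π n₀) k' :=
        (mem_lang_iff (e := e) hW n₀ k' w').mpr ⟨_, _, hG'⟩
      have hw'S : w' ∈ wordLang (SArow2 F π) k' := IH k' hk'k hw'mem
      have hw'm : w' ∈ wordLang (RowApprox2 F π m) k' :=
        wordLang_mono SArow2_sub hw'S
      obtain ⟨d0, d2, ζ, hζE, hζ0, hζk, hζr⟩ :=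
        (mem_lang_iff (e := e) hW m k' w').mp hw'm
      -- (ζ 0, ζ a) ∈ GoodSet m a (pre a), hence ∈ GoodSet m b (pre b)
      have hseg3 : GoodP q W F π e m a (fun i : Fin a => w (Fin.castLE hak i))
          (ζ 0) (ζ (a:ℤ)) := by
        have := seg (π := π) hζE 0 a (fun i : Fin a => w (Fin.castLE hak i)) ?_
        · rwa [zero_add] at this
        · intro i
          have h := hζr (Fin.castLE hak' i)
          have hlt : ((Fin.castLE hak' i : Fin k') : ℕ) < a := by simpa using i.2
          rw [hw'lt _ hlt] at h
          have hidx : (⟨((Fin.castLE hak' i : Fin k') : ℕ), by omega⟩ : Fin k)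
              = Fin.castLE hak i := by
            apply Fin.ext; simp
          rw [hidx] at h
          rw [h]
          have hco : ((Fin.castLE hak' i : Fin k') : ℤ) = 0 + ((i:ℕ) : ℤ) := by
            rw [zero_add]; exact_mod_cast Fin.coe_castLE hak' i
          rw [hco]
      have hmem3 : ((ζ 0, ζ (a:ℤ)) : Col q W m × Col q W m) ∈
          GoodSet q W F π e m a (fun i : Fin a => w (Fin.castLE hak i)) := hseg3
      rw [hGm hak hbk] at hmem3
      -- last piece of ζ
      have hseg4 : GoodP q W F π e m (k - b)
          (fun i : Fin (k - b) => w ⟨b + (i:ℕ), by omega⟩) (ζ (a:ℤ)) (ζ (k':ℤ)) := by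
        have := seg (π := π) hζE (a:ℤ) (k - b)
          (fun i : Fin (k - b) => w ⟨b + (i:ℕ), by omega⟩) ?_
        · have hcast : (a:ℤ) + ((k - b : ℕ) : ℤ) = (k':ℤ) := by omega
          rwa [hcast] at this
        · intro i
          have h := hζr ⟨a + (i:ℕ), by omega⟩
          have hig : a ≤ ((⟨a + (i:ℕ), by omega⟩ : Fin k') : ℕ) := by simp
          rw [hw'ge _ hig] at h
          have hidx : (⟨b + ((((⟨a + (i:ℕ), by omega⟩ : Fin k') : ℕ)) - a), by omega⟩ : Fin k)
              = ⟨b + (i:ℕ), by omega⟩ := by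
            apply Fin.ext; simp
          rw [hidx] at h
          rw [h]
          congr 1
      -- splice: w realizable at width m, contradiction
      have hGm' : GoodP q W F π e m k w d0 d2 := by
        refine splice (d := ζ (a:ℤ)) b k hbk w ?_ ?_
        · rw [← hζ0]
          exact hmem3
        · rw [← hζk]
          exact hseg4
      exact hwm ((mem_lang_iff (e := e) hW m k w).mpr ⟨_, _, hGm'⟩)
    · -- numeric contradiction
      push_neg at hbig
      exfalso
      -- natural-number bound : k + 1 ≤ Q ^ (Q ^ (c * m))
      have hcards : Fintype.card ((Set (Col q W n₀ × Col q W n₀)) ×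
          (Set (Col q W m × Col q W m))) ≤ Q ^ (Q ^ (c * m)) := by
        have hcol : ∀ j : ℕ, j ≤ m → Fintype.card (Col q W j) * Fintype.card (Col q W j) ≤
            Q ^ (2 * ((2*m+1) * (2*W+1))) := by
          intro j hj
          rw [card_col, ← pow_add]
          have h1 : q ^ ((2*j+1) * (2*W+1) + (2*j+1) * (2*W+1)) ≤
              Q ^ ((2*j+1) * (2*W+1) + (2*j+1) * (2*W+1)) :=
            Nat.pow_le_pow_left (by omega) _
          refine h1.trans (Nat.pow_le_pow_right (by omega) ?_)
          have : (2*j+1) * (2*W+1) ≤ (2*m+1) * (2*W+1) :=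
            Nat.mul_le_mul_right _ (by omega)
          omega
        rw [card_pair_set]
        set E1 := 2 * ((2*m+1) * (2*W+1)) with hE1
        calc 2 ^ (Fintype.card (Col q W n₀) * Fintype.card (Col q W n₀)) *
              2 ^ (Fintype.card (Col q W m) * Fintype.card (Col q W m))
            ≤ 2 ^ (Q ^ E1) * 2 ^ (Q ^ E1) := by
              exact Nat.mul_le_mul (Nat.pow_le_pow_right (by omega) (hcol n₀ (by omega)))
                (Nat.pow_le_pow_right (by omega) (hcol m le_rfl))
          _ = 2 ^ (Q ^ E1 + Q ^ E1) := by rw [pow_add]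
          _ ≤ Q ^ (Q ^ E1 + Q ^ E1) := Nat.pow_le_pow_left (by omega) _
          _ ≤ Q ^ (Q ^ (c * m)) := by
              refine Nat.pow_le_pow_right (by omega) ?_
              have h2 : Q ^ E1 + Q ^ E1 = 2 * Q ^ E1 := by ring
              have h3 : 2 * Q ^ E1 ≤ Q ^ (E1 + 1) := by
                rw [pow_succ]
                calc 2 * Q ^ E1 = Q ^ E1 * 2 := by ring
                  _ ≤ Q ^ E1 * Q := Nat.mul_le_mul_left _ hQ2
              have h4 : E1 + 1 ≤ c * m := by
                rw [hE1, hcdef]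
                nlinarith [hm1, Nat.zero_le W]
              calc Q ^ E1 + Q ^ E1 = 2 * Q ^ E1 := h2
                _ ≤ Q ^ (E1 + 1) := h3
                _ ≤ Q ^ (c * m) := Nat.pow_le_pow_right (by omega) h4
      have hkQ : k + 1 ≤ Q ^ (Q ^ (c * m)) := hbig.trans hcards
      clear hw hns hwm w IH hbig hcards hφ hlittle
      -- real-number estimates
      have hk4 : 4 ≤ k := le_trans (le_max_right _ _) hkT
      have hk4R : (4:ℝ) ≤ (k:ℝ) := by exact_mod_cast hk4
      have hkpos : (0:ℝ) < (k:ℝ) := by linarith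
      have hlogk1 : 1 < Real.log k := by
        rw [Real.lt_log_iff_exp_lt hkpos]
        calc Real.exp 1 < 2.7182818286 := Real.exp_one_lt_d9
          _ ≤ 4 := by norm_num
          _ ≤ (k:ℝ) := hk4R
      have hlogkpos : 0 < Real.log k := by linarith
      have hllkpos : 0 < Real.log (Real.log k) := Real.log_pos hlogk1
      have hkQR : (k:ℝ) ≤ ((Q:ℝ)) ^ (Q ^ (c * m)) := by
        have : (k:ℝ) ≤ ((Q ^ (Q ^ (c*m)) : ℕ) : ℝ) := by exact_mod_cast hkQ.trans' (by omega)
        rwa [Nat.cast_pow] at this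
      have hQpos : (0:ℝ) < (Q:ℝ) := by linarith
      have hlk : Real.log k ≤ (Q ^ (c*m) : ℕ) * Real.log Q := by
        calc Real.log k ≤ Real.log ((Q:ℝ) ^ (Q ^ (c*m) : ℕ)) :=
            Real.log_le_log hkpos hkQR
          _ = (Q ^ (c*m) : ℕ) * Real.log Q := Real.log_pow _ _
      have hNpos : (0:ℝ) < ((Q ^ (c*m) : ℕ) : ℝ) := by positivity
      have hll : Real.log (Real.log k) ≤ 2 * ((c:ℝ) * m) * Real.log Q := by
        have hs1 : Real.log (Real.log k) ≤
            Real.log (((Q ^ (c*m) : ℕ) : ℝ) * Real.log Q) :=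
          Real.log_le_log hlogkpos hlk
        have hs2 : Real.log (((Q ^ (c*m) : ℕ) : ℝ) * Real.log Q) =
            Real.log ((Q ^ (c*m) : ℕ) : ℝ) + Real.log (Real.log Q) :=
          Real.log_mul (ne_of_gt hNpos) (ne_of_gt hlogQ)
        have hs3 : Real.log ((Q ^ (c*m) : ℕ) : ℝ) = ((c*m : ℕ) : ℝ) * Real.log Q := by
          rw [Nat.cast_pow, Real.log_pow]
        have hs4 : Real.log (Real.log Q) ≤ Real.log Q :=
          Real.log_le_self (le_of_lt hlogQ)
        have hcm1 : (1:ℝ) ≤ ((c*m : ℕ) : ℝ) := by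
          have h11 : 1 * 1 ≤ c * m := Nat.mul_le_mul hc1 hm1
          exact_mod_cast by omega
        have : Real.log (Real.log k) ≤ ((c*m : ℕ) : ℝ) * Real.log Q + Real.log Q := by
          rw [hs2, hs3] at hs1
          linarith
        have hfin : ((c*m : ℕ) : ℝ) * Real.log Q + Real.log Q ≤
            2 * ((c:ℝ) * m) * Real.log Q := by
          have hXL : (0:ℝ) ≤ ((c:ℝ) * (m:ℝ) - 1) * Real.log Q := by
            refine mul_nonneg ?_ (le_of_lt hlogQ)
            push_cast at hcm1
            linarith
          push_cast at hXL hcm1 ⊢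
          linarith
        calc Real.log (Real.log k) ≤ ((c*m : ℕ) : ℝ) * Real.log Q + Real.log Q := this
          _ ≤ 2 * ((c:ℝ) * m) * Real.log Q := hfin
      -- the little-o bound
      have hKk : K₀ ≤ k := le_trans (le_trans (le_max_left _ _) le_rfl) hkT
      have hsmall := hK₀ k hKk
      rw [Real.norm_eq_abs, Real.norm_eq_abs, abs_of_nonneg (by positivity : (0:ℝ) ≤ (φ k : ℝ)),
        abs_of_nonneg (le_of_lt hllkpos)] at hsmall
      -- combine
      have hmR : (1:ℝ) ≤ (m:ℝ) := by exact_mod_cast hm1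
      have hcR : (1:ℝ) ≤ (c:ℝ) := by exact_mod_cast hc1
      have hfinal : (m:ℝ) ≤ (m:ℝ) / 2 := by
        have h1 : (m:ℝ) ≤ ε * Real.log (Real.log k) := hsmall
        have h2 : ε * Real.log (Real.log k) ≤ ε * (2 * ((c:ℝ) * m) * Real.log Q) :=
          mul_le_mul_of_nonneg_left hll (le_of_lt hε)
        have h3 : ε * (2 * ((c:ℝ) * m) * Real.log Q) = (m:ℝ) / 2 := by
          rw [hεdef]
          field_simp
          ring
        linarith
      linarith
  -- assemble
  have heq : SArow2 F π = PathSet q W F π e n₀ := by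
    apply Set.Subset.antisymm
    · exact subset_trans SArow2_sub (rowApprox_subset_pathSet e n₀)
    · exact subset_trans (pathSet_subset_rowApprox e hW n₀)
        (rowApprox_subset_SArow n₀ hlang)
  exact ⟨Col q W n₀, inferInstance, {cc | ColEdge q W F e n₀ cc.1 cc.2},
    colRho q W π e n₀, heq⟩
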